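/- Let (Z_t) be a Lévy process on ℝ^d such that the support of the law of Z_t is all of ℝ^d for each t > 0, let X₀ be a random variable independent of (Z_t), and let b : ℝ^d → ℝ^d be bounded measurable. Suppose (Y_t) satisfies Y_t = X₀ + ∫_0^t b(Y_s) ds + Z_t. Then for every z ∈ ℝ^d, r > 0 and every λ > 0, the measure γ(C) = E ∫_0^∞ e^{-λt} 1_C(Y_t) dt satisfies γ(B(z,r)) > 0. -/

import Mathlib

open MeasureTheory ProbabilityTheory Real
open scoped ENNReal

theorem stmt9 (d : ℕ)
    (Ω : Type*) [MeasurableSpace Ω] (P : Measure Ω) [IsProbabilityMeasure P]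
    (Z : ℝ → Ω → EuclideanSpace ℝ (Fin d))
    (hZmeas : ∀ t, Measurable (Z t))
    -- the law of `Z t` has full support for every `t > 0`
    (hZsupp : ∀ t > (0:ℝ), ∀ U : Set (EuclideanSpace ℝ (Fin d)),
      IsOpen U → U.Nonempty → 0 < Measure.map (Z t) P U)
    (X₀ : Ω → EuclideanSpace ℝ (Fin d)) (hX₀ : Measurable X₀)
    (hindep : ∀ t > (0:ℝ), IndepFun X₀ (Z t) P)
    (b : EuclideanSpace ℝ (Fin d) → EuclideanSpace ℝ (Fin d)) (hbmeas : Measurable b)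
    (B : ℝ) (hb : ∀ x, ‖b x‖ ≤ B)
    (Y : ℝ → Ω → EuclideanSpace ℝ (Fin d))
    (hYmeas : Measurable (Function.uncurry Y))
    (hY : ∀ (t : ℝ), 0 ≤ t → ∀ ω, Y t ω = X₀ ω + (∫ s in (0:ℝ)..t, b (Y s ω)) + Z t ω) :
    ∀ (z : EuclideanSpace ℝ (Fin d)) (r : ℝ), 0 < r → ∀ l : ℝ, 0 < l →
      0 < ∫⁻ t in Set.Ioi (0:ℝ),
            ENNReal.ofReal (Real.exp (-l * t)) * P {ω | Y t ω ∈ Metric.ball z r} := by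
  intro z r hr l hl
  -- the drift bound constant
  have hB0 : 0 ≤ B := le_trans (norm_nonneg _) (hb 0)
  set C : ℝ := B + 1 with hC
  have hCpos : 0 < C := by positivity
  set t0 : ℝ := r / (2 * C) with ht0def
  have ht0pos : 0 < t0 := by positivity
  -- measurability of t ↦ P {ω | Y t ω ∈ ball z r}
  have hSmeas : MeasurableSet ((Function.uncurry Y) ⁻¹' Metric.ball z r) :=
    hYmeas measurableSet_ball
  have hgmeas : Measurable fun t => P {ω | Y t ω ∈ Metric.ball z r} := by
    have := measurable_measure_prodMk_left (ν := P) hSmeas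
    convert this using 2 with t
    rfl
  set f : ℝ → ℝ≥0∞ := fun t =>
    ENNReal.ofReal (Real.exp (-l * t)) * P {ω | Y t ω ∈ Metric.ball z r} with hf
  have hfmeas : Measurable f := by
    apply Measurable.mul _ hgmeas
    exact (measurable_const.mul measurable_id).exp.ennreal_ofReal
  -- positivity of P {ω | Y t ω ∈ ball z r} for t ∈ (0, t0)
  have hpos : ∀ t ∈ Set.Ioo (0:ℝ) t0, 0 < P {ω | Y t ω ∈ Metric.ball z r} := by
    intro t ht
    have ht0 : 0 < t := ht.1
    -- drift smallness
    have hdrift : ∀ ω, ‖(∫ s in (0:ℝ)..t, b (Y s ω))‖ < r / 2 := by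
      intro ω
      have h1 : ‖(∫ s in (0:ℝ)..t, b (Y s ω))‖ ≤ C * |t - 0| := by
        apply intervalIntegral.norm_integral_le_of_norm_le_const
        intro x hx
        exact le_trans (hb _) (by linarith)
      have h2 : C * |t - 0| = C * t := by rw [sub_zero, abs_of_pos ht0]
      have h3 : C * t < r / 2 := by
        have h4 : t < r / (2 * C) := ht.2
        rw [lt_div_iff₀ (by positivity)] at h4
        nlinarith
      calc ‖(∫ s in (0:ℝ)..t, b (Y s ω))‖ ≤ C * t := by rw [h2] at h1; exact h1
        _ < r / 2 := h3
    -- subset relation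
    have hsubset : {ω | X₀ ω + Z t ω ∈ Metric.ball z (r/2)} ⊆
        {ω | Y t ω ∈ Metric.ball z r} := by
      intro ω hω
      simp only [Set.mem_setOf_eq, Metric.mem_ball, dist_eq_norm] at hω ⊢
      rw [hY t ht0.le ω]
      have : X₀ ω + (∫ s in (0:ℝ)..t, b (Y s ω)) + Z t ω - z
          = (X₀ ω + Z t ω - z) + (∫ s in (0:ℝ)..t, b (Y s ω)) := by abel
      rw [this]
      calc ‖(X₀ ω + Z t ω - z) + (∫ s in (0:ℝ)..t, b (Y s ω))‖
          ≤ ‖X₀ ω + Z t ω - z‖ + ‖(∫ s in (0:ℝ)..t, b (Y s ω))‖ := norm_add_le _ _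
        _ < r/2 + r/2 := add_lt_add hω (hdrift ω)
        _ = r := by ring
    -- positivity of P (X₀ + Z t ∈ ball z (r/2)) via independence
    have hZt := hZmeas t
    haveI : IsProbabilityMeasure (P.map (Z t)) := Measure.isProbabilityMeasure_map hZt.aemeasurable
    haveI : IsProbabilityMeasure (P.map X₀) := Measure.isProbabilityMeasure_map hX₀.aemeasurable
    have hprod : P.map (fun ω => (X₀ ω, Z t ω)) = (P.map X₀).prod (P.map (Z t)) :=
      (indepFun_iff_map_prod_eq_prod_map_map hX₀.aemeasurable hZt.aemeasurable).mp
        (hindep t ht0)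
    have hUmeas : MeasurableSet {p : EuclideanSpace ℝ (Fin d) × EuclideanSpace ℝ (Fin d) |
        p.1 + p.2 ∈ Metric.ball z (r/2)} :=
      (measurable_fst.add measurable_snd) measurableSet_ball
    have key : 0 < P {ω | X₀ ω + Z t ω ∈ Metric.ball z (r/2)} := by
      have heq : P {ω | X₀ ω + Z t ω ∈ Metric.ball z (r/2)}
          = ((P.map X₀).prod (P.map (Z t))) {p | p.1 + p.2 ∈ Metric.ball z (r/2)} := by
        rw [← hprod, Measure.map_apply (hX₀.prodMk hZt) hUmeas]
        rfl
      rw [heq, Measure.prod_apply hUmeas]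
      -- inner measure is positive everywhere
      have hinner : ∀ x, 0 < (P.map (Z t))
          (Prod.mk x ⁻¹' {p | p.1 + p.2 ∈ Metric.ball z (r/2)}) := by
        intro x
        apply hZsupp t ht0
        · exact (Metric.isOpen_ball).preimage (continuous_const.add continuous_id)
        · exact ⟨z - x, by simp [Metric.mem_ball, hr, half_pos hr]⟩
      by_contra h
      push_neg at h
      have h0 : (∫⁻ x, (P.map (Z t)) (Prod.mk x ⁻¹' {p | p.1 + p.2 ∈ Metric.ball z (r/2)})
          ∂(P.map X₀)) = 0 := le_antisymm h zero_le
      rw [lintegral_eq_zero_iff (measurable_measure_prodMk_left hUmeas)] at h0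
      obtain ⟨x, hx⟩ := h0.exists
      exact absurd hx (hinner x).ne'
    exact lt_of_lt_of_le key (measure_mono hsubset)
  -- conclude: lower bound restriction to Ioo 0 t0
  have hmono : (∫⁻ t in Set.Ioo (0:ℝ) t0, f t) ≤ ∫⁻ t in Set.Ioi (0:ℝ), f t :=
    lintegral_mono' (Measure.restrict_mono (fun x hx => hx.1) le_rfl) le_rfl
  refine lt_of_lt_of_le ?_ hmono
  rw [lintegral_pos_iff_support hfmeas]
  have hsupp : Set.Ioo (0:ℝ) t0 ⊆ Function.support f := by
    intro t ht
    have h1 : 0 < ENNReal.ofReal (Real.exp (-l * t)) := by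
      simp [Real.exp_pos]
    exact (ENNReal.mul_pos h1.ne' (hpos t ht).ne').ne'
  calc (0:ℝ≥0∞) < ENNReal.ofReal t0 := by simp [ht0pos]
    _ = (volume.restrict (Set.Ioo (0:ℝ) t0)) (Set.Ioo (0:ℝ) t0) := by
        rw [Measure.restrict_apply measurableSet_Ioo, Set.inter_self, Real.volume_Ioo, sub_zero]
    _ ≤ (volume.restrict (Set.Ioo (0:ℝ) t0)) (Function.support f) := by
        rw [Measure.restrict_apply' measurableSet_Ioo,
          Measure.restrict_apply' measurableSet_Ioo]
        exact measure_mono (Set.inter_subset_inter hsupp le_rfl)
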